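/- Let k ≥ 1 be an integer, m > 0, a > 0, s > 1 and R > 0, and let ν be a nonnegative finite Borel measure on ℝ^k with supp ν ⊆ B(0, R/2). Then there exists a constant C = C(k, m, a, s, R) > 0 such that for every x ∈ ℝ^k with |x| < R, ∫₀^{R} t^{a−1} ( ∫_{ℝ^k} (t + |x−y|)^{−m} dν(y) )^{s} dt ≤ C ∫₀^{4R} ν(B(x,r))^{s} r^{a − ms − 1} dr. -/

import Mathlib

open MeasureTheory Set Metric
open scoped ENNReal NNReal

section AUX
private lemma holder_geom {s : ℝ} (hs : 1 < s) {w : ℝ≥0∞} (hw1 : 1 < w) (hwt : w ≠ ∞) :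
    ∃ C : ℝ≥0∞, C ≠ ∞ ∧ ∀ b : ℕ → ℝ≥0∞,
      (∑' j, b j) ^ s ≤ C * ∑' j, w ^ j * b j ^ s := by
  have hs0 : (0:ℝ) < s := lt_trans one_pos hs
  have hs1 : (0:ℝ) < s - 1 := by linarith
  set p : ℝ := s / (s - 1) with hp
  have hpq : p.HolderConjugate s := by
    rw [Real.holderConjugate_iff]; constructor
    · rw [hp, lt_div_iff₀ hs1]; linarith
    · rw [hp]; field_simp; ring
  set r0 : ℝ≥0∞ := w ^ (-(1/(s-1))) with hr0
  have hr0lt : r0 < 1 := ENNReal.rpow_lt_one_of_one_lt_of_neg hw1 (by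
    rw [neg_lt, neg_zero]; positivity)
  have hw0 : w ≠ 0 := (zero_lt_one.trans hw1).ne'
  refine ⟨((1 - r0)⁻¹) ^ (s-1), ?_, ?_⟩
  · exact ENNReal.rpow_ne_top_of_nonneg hs1.le (ENNReal.inv_ne_top.2 (tsub_pos_of_lt hr0lt).ne')
  intro b
  set f : ℕ → ℝ≥0∞ := fun j => (w ^ j : ℝ≥0∞) ^ (-(1/s)) with hf
  set g : ℕ → ℝ≥0∞ := fun j => (w ^ j : ℝ≥0∞) ^ (1/s) * b j with hg
  have hwj0 : ∀ j : ℕ, (w:ℝ≥0∞)^j ≠ 0 := fun j => pow_ne_zero _ hw0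
  have hwjt : ∀ j : ℕ, (w:ℝ≥0∞)^j ≠ ∞ := fun j => ENNReal.pow_ne_top hwt
  have hfg : ∀ j, b j = (f * g) j := by
    intro j
    simp only [hf, hg, Pi.mul_apply]
    rw [← mul_assoc, ← ENNReal.rpow_add _ _ (hwj0 j) (hwjt j)]
    simp
  have hfp : ∀ j : ℕ, f j ^ p = r0 ^ j := by
    intro j
    simp only [hf]
    rw [← ENNReal.rpow_natCast w j, ← ENNReal.rpow_mul, ← ENNReal.rpow_mul, hr0,
      ← ENNReal.rpow_natCast (w ^ (-(1/(s-1)))) j, ← ENNReal.rpow_mul]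
    congr 1
    rw [hp]
    field_simp
  have hgs : ∀ j : ℕ, g j ^ s = w ^ j * b j ^ s := by
    intro j
    simp only [hg]
    rw [ENNReal.mul_rpow_of_nonneg _ _ hs0.le, ← ENNReal.rpow_mul]
    have h2 : 1/s * s = 1 := by field_simp
    rw [h2, ENNReal.rpow_one]
  have hH := ENNReal.lintegral_mul_le_Lp_mul_Lq (Measure.count : Measure ℕ) hpq
    (measurable_of_countable f).aemeasurable (measurable_of_countable g).aemeasurable
  rw [lintegral_count, lintegral_count, lintegral_count] at hH
  have key : (∑' j, b j) ≤ ((1 - r0)⁻¹) ^ (1/p) * (∑' j, w ^ j * b j ^ s) ^ (1/s) := by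
    calc (∑' j, b j) = ∑' j, (f * g) j := tsum_congr hfg
      _ ≤ (∑' j, f j ^ p) ^ (1/p) * (∑' j, g j ^ s) ^ (1/s) := hH
      _ = ((1 - r0)⁻¹) ^ (1/p) * (∑' j, w ^ j * b j ^ s) ^ (1/s) := by
          rw [tsum_congr hfp, tsum_congr hgs, ENNReal.tsum_geometric]
  calc (∑' j, b j) ^ s ≤ (((1 - r0)⁻¹) ^ (1/p) * (∑' j, w ^ j * b j ^ s) ^ (1/s)) ^ s :=
        ENNReal.rpow_le_rpow key hs0.le
    _ = ((1 - r0)⁻¹) ^ (s-1) * ∑' j, w ^ j * b j ^ s := by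
        rw [ENNReal.mul_rpow_of_nonneg _ _ hs0.le, ← ENNReal.rpow_mul, ← ENNReal.rpow_mul]
        have h1 : 1/p * s = s - 1 := by rw [hp]; field_simp
        have h2 : 1/s * s = 1 := by field_simp
        rw [h1, h2, ENNReal.rpow_one]

private lemma scale_lintegral {c : ℝ} (hc : 0 < c) (Φ : ℝ → ℝ≥0∞) (hΦ : Measurable Φ) (T : ℝ) :
    ∫⁻ t in Ioc (0:ℝ) T, Φ (c * t) = ENNReal.ofReal c⁻¹ * ∫⁻ u in Ioc (0:ℝ) (c * T), Φ u := by
  have hc0 : c ≠ 0 := hc.ne'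
  have hpre : (fun t : ℝ => c * t) ⁻¹' Ioc 0 (c * T) = Ioc 0 T := by
    ext t
    simp only [mem_preimage, mem_Ioc]
    constructor
    · rintro ⟨h1, h2⟩
      refine ⟨?_, le_of_mul_le_mul_left h2 hc⟩
      rcases mul_pos_iff.1 h1 with h | h
      · exact h.2
      · exact absurd h.1 (not_lt.2 hc.le)
    · rintro ⟨h1, h2⟩
      exact ⟨mul_pos hc h1, mul_le_mul_of_nonneg_left h2 hc.le⟩
  calc ∫⁻ t in Ioc (0:ℝ) T, Φ (c * t)
      = ∫⁻ u, Φ u ∂(Measure.map (fun t => c * t) (volume.restrict (Ioc (0:ℝ) T))) := by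
        rw [lintegral_map hΦ (measurable_const_mul c)]
    _ = ∫⁻ u, Φ u ∂((Measure.map (fun t => c * t) volume).restrict (Ioc (0:ℝ) (c * T))) := by
        rw [Measure.restrict_map (measurable_const_mul c) measurableSet_Ioc, hpre]
    _ = ENNReal.ofReal c⁻¹ * ∫⁻ u in Ioc (0:ℝ) (c * T), Φ u := by
        rw [Real.map_volume_mul_left hc0, abs_of_pos (inv_pos.2 hc),
          Measure.restrict_smul, lintegral_smul_measure, smul_eq_mul]

end AUX

theorem stmt_12 (k : ℕ) (hk : 1 ≤ k) (m a s R : ℝ)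
    (hm : 0 < m) (ha : 0 < a) (hs : 1 < s) (hR : 0 < R) :
    ∃ C > 0, ∀ ν : Measure (EuclideanSpace ℝ (Fin k)), IsFiniteMeasure ν →
      ν (ball (0 : EuclideanSpace ℝ (Fin k)) (R / 2))ᶜ = 0 →
      ∀ x : EuclideanSpace ℝ (Fin k), ‖x‖ < R →
      ∫⁻ t in Set.Ioc (0 : ℝ) R, ENNReal.ofReal (t ^ (a - 1)) *
          (∫⁻ y, ENNReal.ofReal ((t + dist x y) ^ (-m)) ∂ν) ^ s ≤
        ENNReal.ofReal C * ∫⁻ r in Set.Ioc (0 : ℝ) (4 * R),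
          (ν (ball x r)) ^ s * ENNReal.ofReal (r ^ (a - m * s - 1)) := by
  have hs0 : (0:ℝ) < s := lt_trans one_pos hs
  -- the Hölder weight
  have hw1 : (1:ℝ≥0∞) < ENNReal.ofReal ((2:ℝ) ^ (a/2)) := by
    rw [← ENNReal.ofReal_one, ENNReal.ofReal_lt_ofReal_iff (by positivity)]
    exact Real.one_lt_rpow_iff_of_pos (by norm_num) |>.2 (Or.inl ⟨one_lt_two, by linarith⟩)
  obtain ⟨C₁, hC₁top, hC₁⟩ := holder_geom hs hw1 ENNReal.ofReal_ne_top
  set w : ℝ≥0∞ := ENNReal.ofReal ((2:ℝ) ^ (a/2)) with hwdef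
  set ρ : ℝ≥0∞ := ENNReal.ofReal ((2:ℝ) ^ (-(a/2))) with hρdef
  have hρ1 : ρ < 1 := by
    rw [hρdef, ← ENNReal.ofReal_one, ENNReal.ofReal_lt_ofReal_iff one_pos]
    exact Real.rpow_lt_one_of_one_lt_of_neg one_lt_two (by linarith)
  set K : ℝ≥0∞ := ENNReal.ofReal ((2:ℝ) ^ (m*s)) * C₁ with hKdef
  have hKtop : K ≠ ∞ := ENNReal.mul_ne_top ENNReal.ofReal_ne_top hC₁top
  set Ctot : ℝ≥0∞ := K * (1 - ρ)⁻¹ with hCtotdef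
  have hCtot_top : Ctot ≠ ∞ :=
    ENNReal.mul_ne_top hKtop (ENNReal.inv_ne_top.2 (tsub_pos_of_lt hρ1).ne')
  refine ⟨Ctot.toReal + 1, by positivity, ?_⟩
  intro ν _ hν x hx
  set RHS0 : ℝ≥0∞ :=
    ∫⁻ r in Ioc (0:ℝ) (4*R), (ν (ball x r)) ^ s * ENNReal.ofReal (r ^ (a - m*s - 1)) with hRHS0
  set b : ℕ → ℝ → ℝ≥0∞ := fun j t =>
    if (2:ℝ)^j * t < 4*R then
      ENNReal.ofReal (((2:ℝ)^j * t) ^ (-m)) * ν (ball x ((2:ℝ)^j * t)) else 0 with hbdef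
  -- measurability
  have hνmono : Monotone fun u : ℝ => ν (ball x u) :=
    fun u v huv => measure_mono (ball_subset_ball huv)
  have hνball : Measurable fun u : ℝ => ν (ball x u) := hνmono.measurable
  have hbmeas : ∀ j, Measurable (b j) := by
    intro j
    have h1 : Measurable fun t : ℝ => ENNReal.ofReal (((2:ℝ)^j * t) ^ (-m)) := by fun_prop
    have h2 : Measurable fun t : ℝ => ν (ball x ((2:ℝ)^j * t)) :=
      hνball.comp (measurable_const_mul _)
    exact Measurable.ite (measurableSet_lt (measurable_const_mul _) measurable_const)
      (h1.mul h2) measurable_const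
  have hball_half : ball (0:EuclideanSpace ℝ (Fin k)) (R/2) ⊆ ball x (2*R) := by
    intro y hy
    have h1 : dist y x ≤ dist y 0 + dist 0 x := dist_triangle _ _ _
    have h2 : dist y 0 < R/2 := mem_ball.1 hy
    have h3 : dist 0 x < R := by
      rw [dist_comm, dist_zero_right]; exact hx
    exact mem_ball.2 (by linarith)
  -- Step 1 : pointwise bound on the potential
  have step1 : ∀ t ∈ Ioc (0:ℝ) R,
      (∫⁻ y, ENNReal.ofReal ((t + dist x y) ^ (-m)) ∂ν)
        ≤ ENNReal.ofReal ((2:ℝ)^m) * ∑' j, b j t := by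
    intro t ht
    obtain ⟨ht0, htR⟩ := ht
    set B : ℕ → Set (EuclideanSpace ℝ (Fin k)) := fun j => ball x ((2:ℝ)^j * t) with hBdef
    have hBmono : Monotone B := by
      intro i j hij
      refine ball_subset_ball ?_
      have h2 : (2:ℝ)^i ≤ 2^j := pow_le_pow_right₀ one_le_two hij
      nlinarith
    have hcover : ball x (2*R) ⊆ ⋃ j, B j := by
      intro y hy
      obtain ⟨n, hn⟩ := pow_unbounded_of_one_lt ((2*R)/t) (one_lt_two (α := ℝ))
      refine mem_iUnion.2 ⟨n, mem_ball.2 ?_⟩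
      rw [div_lt_iff₀ ht0] at hn
      have hy' : dist y x < 2*R := mem_ball.1 hy
      have hnn : (0:ℝ) ≤ dist y x := dist_nonneg
      nlinarith
    have hae : ∀ᵐ y ∂ν, y ∈ ⋃ j, disjointed B j := by
      rw [iUnion_disjointed, ae_iff]
      refine measure_mono_null (fun y hy => ?_) hν
      simp only [mem_setOf_eq] at hy
      exact fun hmem => hy (hcover (hball_half hmem))
    have hrw : ∫⁻ y, ENNReal.ofReal ((t + dist x y) ^ (-m)) ∂ν
        = ∫⁻ y in ⋃ j, disjointed B j, ENNReal.ofReal ((t + dist x y) ^ (-m)) ∂ν := by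
      rw [Measure.restrict_eq_self_of_ae_mem hae]
    rw [hrw]
    refine le_trans (lintegral_iUnion_le _ _) ?_
    rw [← ENNReal.tsum_mul_left]
    refine Summable.tsum_le_tsum (fun j => ?_) ENNReal.summable ENNReal.summable
    by_cases hcond : (2:ℝ)^j * t < 4*R
    · have hsub : disjointed B j ⊆ B j := disjointed_subset _ _
      have hpt : ∀ y ∈ disjointed B j,
          ENNReal.ofReal ((t + dist x y) ^ (-m))
            ≤ ENNReal.ofReal ((2:ℝ)^m * ((2:ℝ)^j * t) ^ (-m)) := by
        intro y hy
        refine ENNReal.ofReal_le_ofReal ?_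
        have hm' : -m ≤ 0 := by linarith
        match j with
        | 0 =>
          have h1 : (t + dist x y) ^ (-m) ≤ t ^ (-m) :=
            Real.rpow_le_rpow_of_nonpos ht0 (le_add_of_nonneg_right dist_nonneg) hm'
          have h3 : (1:ℝ) ≤ (2:ℝ)^m := Real.one_le_rpow one_le_two hm.le
          have h4 : (0:ℝ) ≤ t ^ (-m) := Real.rpow_nonneg ht0.le _
          calc (t + dist x y) ^ (-m) ≤ t ^ (-m) := h1
            _ ≤ 2^m * t^(-m) := le_mul_of_one_le_left h4 h3
            _ = 2^m * ((2:ℝ)^(0:ℕ) * t)^(-m) := by norm_num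
        | (i+1) =>
          have hyB : y ∉ B i := by
            have h5 := (hBmono.disjointed_succ (not_isMax i) : disjointed B (i+1) = B (i+1) \ B i) ▸ hy
            exact h5.2
          have hd : (2:ℝ)^i * t ≤ dist y x := by
            by_contra h
            exact hyB (mem_ball.2 (not_le.1 h))
          have hpos : (0:ℝ) < 2^i * t := by positivity
          have h1 : (t + dist x y) ^ (-m) ≤ ((2:ℝ)^i * t) ^ (-m) := by
            refine Real.rpow_le_rpow_of_nonpos hpos ?_ hm'
            rw [dist_comm]
            linarith
          have heq : ((2:ℝ)^i * t) ^ (-m) = 2^m * ((2:ℝ)^(i+1) * t)^(-m) := by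
            have h6 : ((2:ℝ)^(i+1) * t) = 2 * ((2:ℝ)^i * t) := by ring
            rw [h6, Real.mul_rpow (by norm_num) hpos.le, ← mul_assoc,
              ← Real.rpow_add two_pos]
            norm_num
          rw [heq] at h1
          exact h1
      calc ∫⁻ y in disjointed B j, ENNReal.ofReal ((t + dist x y) ^ (-m)) ∂ν
          ≤ ∫⁻ _ in disjointed B j, ENNReal.ofReal ((2:ℝ)^m * ((2:ℝ)^j * t) ^ (-m)) ∂ν :=
            setLIntegral_mono measurable_const hpt
        _ = ENNReal.ofReal ((2:ℝ)^m * ((2:ℝ)^j * t) ^ (-m)) * ν (disjointed B j) :=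
            setLIntegral_const _ _
        _ ≤ ENNReal.ofReal ((2:ℝ)^m * ((2:ℝ)^j * t) ^ (-m)) * ν (B j) :=
            mul_le_mul_right (measure_mono hsub) _
        _ = ENNReal.ofReal ((2:ℝ)^m) * b j t := by
            simp only [hbdef, hBdef, if_pos hcond]
            rw [ENNReal.ofReal_mul (by positivity), mul_assoc]
    · simp only [hbdef, if_neg hcond, mul_zero]
      match j with
      | 0 =>
        exfalso
        apply hcond
        norm_num
        linarith
      | (i+1) =>
        have h2R : 2*R ≤ (2:ℝ)^i * t := by
          have h7 : (4:ℝ)*R ≤ 2^(i+1) * t := not_lt.1 hcond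
          have h8 : (2:ℝ)^(i+1) * t = 2 * (2^i * t) := by ring
          linarith
        have hsubnull : disjointed B (i+1) ⊆ (ball (0:EuclideanSpace ℝ (Fin k)) (R/2))ᶜ := by
          intro y hy
          have hyB : y ∉ B i := ((hBmono.disjointed_succ (not_isMax i) : disjointed B (i+1) = B (i+1) \ B i) ▸ hy).2
          intro hymem
          exact hyB (ball_subset_ball h2R (hball_half hymem))
        have hnull : ν (disjointed B (i+1)) = 0 := measure_mono_null hsubnull hν
        rw [setLIntegral_measure_zero _ _ hnull]
  -- Step 4 : per-j integral bound
  have step4 : ∀ j : ℕ,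
      (∫⁻ t in Ioc (0:ℝ) R, ENNReal.ofReal (t ^ (a-1)) * (b j t) ^ s)
        ≤ ENNReal.ofReal (((2:ℝ)^j) ^ (-a)) * RHS0 := by
    intro j
    have h2j : (0:ℝ) < (2:ℝ)^j := by positivity
    set Φ : ℝ → ℝ≥0∞ := fun u =>
      if u < 4*R then
        ENNReal.ofReal ((u / (2:ℝ)^j) ^ (a-1)) * (ENNReal.ofReal (u ^ (-m)) * ν (ball x u)) ^ s
      else 0 with hΦdef
    have hΦmeas : Measurable Φ := by
      refine Measurable.ite (measurableSet_lt measurable_id measurable_const) ?_ measurable_const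
      have h2 : Measurable fun u : ℝ => ENNReal.ofReal (u ^ (-m)) := by fun_prop
      have h4 := h2.mul hνball
      exact (by fun_prop : Measurable fun u : ℝ => ENNReal.ofReal ((u / (2:ℝ)^j) ^ (a-1))).mul (h4.pow_const s)
    have hrwt : ∀ t : ℝ, ENNReal.ofReal (t ^ (a-1)) * (b j t) ^ s = Φ ((2:ℝ)^j * t) := by
      intro t
      simp only [hbdef, hΦdef]
      by_cases hcond : (2:ℝ)^j * t < 4*R
      · rw [if_pos hcond, if_pos hcond, mul_div_cancel_left₀ _ h2j.ne']
      · rw [if_neg hcond, if_neg hcond, ENNReal.zero_rpow_of_pos hs0, mul_zero]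
    have hG : ∀ u ∈ Iio (4*R) ∩ Ioc (0:ℝ) ((2:ℝ)^j * R),
        ENNReal.ofReal ((u / (2:ℝ)^j) ^ (a-1)) * (ENNReal.ofReal (u ^ (-m)) * ν (ball x u)) ^ s
        = ENNReal.ofReal (((2:ℝ)^j) ^ (-(a-1)))
            * (ν (ball x u) ^ s * ENNReal.ofReal (u ^ (a - m*s - 1))) := by
      intro u hu
      have hu0 : (0:ℝ) < u := hu.2.1
      have hAC : ENNReal.ofReal (u ^ (a-1)) * ENNReal.ofReal (u ^ ((-m) * s))
          = ENNReal.ofReal (u ^ (a - m*s - 1)) := by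
        rw [← ENNReal.ofReal_mul (Real.rpow_nonneg hu0.le _), ← Real.rpow_add hu0]
        congr 1
        ring
      rw [Real.div_rpow hu0.le h2j.le, div_eq_mul_inv, ← Real.rpow_neg h2j.le,
        ENNReal.ofReal_mul (Real.rpow_nonneg hu0.le _),
        ENNReal.mul_rpow_of_nonneg _ _ hs0.le,
        ENNReal.ofReal_rpow_of_pos (Real.rpow_pos_of_pos hu0 _),
        ← Real.rpow_mul hu0.le, ← hAC]
      ring
    have hmid : ∫⁻ u in Ioc (0:ℝ) ((2:ℝ)^j * R), Φ u
        ≤ ENNReal.ofReal (((2:ℝ)^j) ^ (-(a-1))) * RHS0 := by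
      have hind : (fun u => Φ u) = fun u => (Iio (4*R)).indicator
          (fun u => ENNReal.ofReal ((u / (2:ℝ)^j) ^ (a-1))
            * (ENNReal.ofReal (u ^ (-m)) * ν (ball x u)) ^ s) u := by
        funext u
        simp only [hΦdef, indicator_apply, mem_Iio]
      calc ∫⁻ u in Ioc (0:ℝ) ((2:ℝ)^j * R), Φ u
          = ∫⁻ u in Iio (4*R) ∩ Ioc (0:ℝ) ((2:ℝ)^j * R),
              ENNReal.ofReal ((u / (2:ℝ)^j) ^ (a-1))
                * (ENNReal.ofReal (u ^ (-m)) * ν (ball x u)) ^ s := by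
            rw [hind, lintegral_indicator measurableSet_Iio,
              Measure.restrict_restrict measurableSet_Iio]
        _ = ∫⁻ u in Iio (4*R) ∩ Ioc (0:ℝ) ((2:ℝ)^j * R),
              ENNReal.ofReal (((2:ℝ)^j) ^ (-(a-1)))
                * (ν (ball x u) ^ s * ENNReal.ofReal (u ^ (a - m*s - 1))) := by
            refine setLIntegral_congr_fun (measurableSet_Iio.inter measurableSet_Ioc)
              hG
        _ = ENNReal.ofReal (((2:ℝ)^j) ^ (-(a-1)))
              * ∫⁻ u in Iio (4*R) ∩ Ioc (0:ℝ) ((2:ℝ)^j * R),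
                  ν (ball x u) ^ s * ENNReal.ofReal (u ^ (a - m*s - 1)) :=
            lintegral_const_mul' _ _ ENNReal.ofReal_ne_top
        _ ≤ ENNReal.ofReal (((2:ℝ)^j) ^ (-(a-1))) * RHS0 := by
            refine mul_le_mul_right (lintegral_mono_set ?_) _
            intro u hu
            exact ⟨hu.2.1, hu.1.le⟩
    calc ∫⁻ t in Ioc (0:ℝ) R, ENNReal.ofReal (t ^ (a-1)) * (b j t) ^ s
        = ∫⁻ t in Ioc (0:ℝ) R, Φ ((2:ℝ)^j * t) := lintegral_congr fun t => hrwt t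
      _ = ENNReal.ofReal (((2:ℝ)^j)⁻¹) * ∫⁻ u in Ioc (0:ℝ) ((2:ℝ)^j * R), Φ u :=
          scale_lintegral h2j Φ hΦmeas R
      _ ≤ ENNReal.ofReal (((2:ℝ)^j)⁻¹) * (ENNReal.ofReal (((2:ℝ)^j) ^ (-(a-1))) * RHS0) :=
          mul_le_mul_right hmid _
      _ = ENNReal.ofReal (((2:ℝ)^j) ^ (-a)) * RHS0 := by
          rw [← mul_assoc, ← ENNReal.ofReal_mul (by positivity)]
          congr 2
          rw [← Real.rpow_neg_one ((2:ℝ)^j), ← Real.rpow_add h2j]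
          congr 1
          ring
  -- Step 5 : constants
  have step5 : ∀ j : ℕ, w ^ j * ENNReal.ofReal (((2:ℝ)^j) ^ (-a)) = ρ ^ j := by
    intro j
    have h2j : (0:ℝ) < (2:ℝ)^j := by positivity
    rw [hwdef, hρdef, ← ENNReal.ofReal_pow (by positivity), ← ENNReal.ofReal_mul (by positivity),
      ← ENNReal.ofReal_pow (by positivity)]
    congr 1
    rw [← Real.rpow_natCast ((2:ℝ) ^ (a/2)) j, ← Real.rpow_natCast ((2:ℝ) ^ (-(a/2))) j,
      ← Real.rpow_natCast (2:ℝ) j, ← Real.rpow_mul (by norm_num), ← Real.rpow_mul (by norm_num),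
      ← Real.rpow_mul (by norm_num), ← Real.rpow_add two_pos]
    congr 1
    ring
  -- Assemble
  calc ∫⁻ t in Set.Ioc (0:ℝ) R, ENNReal.ofReal (t ^ (a - 1)) *
          (∫⁻ y, ENNReal.ofReal ((t + dist x y) ^ (-m)) ∂ν) ^ s
      ≤ ∫⁻ t in Ioc (0:ℝ) R, K * (ENNReal.ofReal (t ^ (a-1)) * ∑' j, w ^ j * (b j t) ^ s) := by
        refine setLIntegral_mono (by fun_prop) ?_
        intro t ht
        have h2 : (∫⁻ y, ENNReal.ofReal ((t + dist x y) ^ (-m)) ∂ν) ^ s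
            ≤ ENNReal.ofReal ((2:ℝ)^(m*s)) * (C₁ * ∑' j, w ^ j * (b j t) ^ s) := by
          calc (∫⁻ y, ENNReal.ofReal ((t + dist x y) ^ (-m)) ∂ν) ^ s
              ≤ (ENNReal.ofReal ((2:ℝ)^m) * ∑' j, b j t) ^ s :=
                ENNReal.rpow_le_rpow (step1 t ht) hs0.le
            _ = ENNReal.ofReal ((2:ℝ)^m) ^ s * (∑' j, b j t) ^ s :=
                ENNReal.mul_rpow_of_nonneg _ _ hs0.le
            _ ≤ ENNReal.ofReal ((2:ℝ)^m) ^ s * (C₁ * ∑' j, w ^ j * (b j t) ^ s) :=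
                mul_le_mul_right (hC₁ _) _
            _ = ENNReal.ofReal ((2:ℝ)^(m*s)) * (C₁ * ∑' j, w ^ j * (b j t) ^ s) := by
                rw [ENNReal.ofReal_rpow_of_pos (by positivity), ← Real.rpow_mul (by norm_num)]
        calc ENNReal.ofReal (t ^ (a-1)) * (∫⁻ y, ENNReal.ofReal ((t + dist x y) ^ (-m)) ∂ν) ^ s
            ≤ ENNReal.ofReal (t ^ (a-1))
                * (ENNReal.ofReal ((2:ℝ)^(m*s)) * (C₁ * ∑' j, w ^ j * (b j t) ^ s)) :=
              mul_le_mul_right h2 _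
          _ = K * (ENNReal.ofReal (t ^ (a-1)) * ∑' j, w ^ j * (b j t) ^ s) := by
              rw [hKdef]; ring
    _ = K * ∑' j, w ^ j * ∫⁻ t in Ioc (0:ℝ) R, ENNReal.ofReal (t ^ (a-1)) * (b j t) ^ s := by
        rw [lintegral_const_mul' K _ hKtop]
        congr 1
        have hmeas2 : ∀ j : ℕ,
            Measurable fun t : ℝ => w ^ j * (ENNReal.ofReal (t ^ (a-1)) * (b j t) ^ s) := by
          intro j
          have := hbmeas j
          fun_prop
        calc ∫⁻ t in Ioc (0:ℝ) R, ENNReal.ofReal (t ^ (a-1)) * ∑' j, w ^ j * (b j t) ^ s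
            = ∫⁻ t in Ioc (0:ℝ) R, ∑' j, w ^ j * (ENNReal.ofReal (t ^ (a-1)) * (b j t) ^ s) := by
              refine lintegral_congr fun t => ?_
              rw [← ENNReal.tsum_mul_left]
              exact tsum_congr fun j => by ring
          _ = ∑' j, ∫⁻ t in Ioc (0:ℝ) R, w ^ j * (ENNReal.ofReal (t ^ (a-1)) * (b j t) ^ s) :=
              lintegral_tsum fun j => (hmeas2 j).aemeasurable
          _ = ∑' j, w ^ j * ∫⁻ t in Ioc (0:ℝ) R, ENNReal.ofReal (t ^ (a-1)) * (b j t) ^ s :=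
              tsum_congr fun j => lintegral_const_mul' _ _ (ENNReal.pow_ne_top ENNReal.ofReal_ne_top)
    _ ≤ K * ∑' j, w ^ j * (ENNReal.ofReal (((2:ℝ)^j) ^ (-a)) * RHS0) := by
        refine mul_le_mul_right (Summable.tsum_le_tsum (fun j => mul_le_mul_right (step4 j) _)
          ENNReal.summable ENNReal.summable) _
    _ = Ctot * RHS0 := by
        have hsum : (∑' j : ℕ, w ^ j * (ENNReal.ofReal (((2:ℝ)^j) ^ (-a)) * RHS0))
            = (∑' j : ℕ, ρ ^ j) * RHS0 := by
          rw [← ENNReal.tsum_mul_right]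
          exact tsum_congr fun j => by rw [← mul_assoc, step5 j]
        rw [hsum, ENNReal.tsum_geometric, hCtotdef]
        ring
    _ ≤ ENNReal.ofReal (Ctot.toReal + 1) * RHS0 := by
        refine mul_le_mul_left ?_ _
        conv_lhs => rw [← ENNReal.ofReal_toReal hCtot_top]
        exact ENNReal.ofReal_le_ofReal (by linarith)
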